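/- Let k be a field and c ∈ k. The polynomial Y² − X³ − cX² generates a prime ideal in k[X,Y]; equivalently, the quotient ring k[X,Y]/(Y² − X³ − cX²) is an integral domain. -/

import Mathlib

open Polynomial

noncomputable section

variable (k : Type*) [Field k]

/-- the inner polynomial `X³ + cX²` -/
def aPoly (c : k) : Polynomial k := X ^ 3 + C c * X ^ 2

lemma aPoly_natDegree (c : k) : (aPoly k c).natDegree = 3 := by
  unfold aPoly; compute_degree!

lemma aPoly_not_square (c : k) (b : FractionRing (Polynomial k)) :
    b ^ 2 ≠ algebraMap (Polynomial k) _ (aPoly k c) := by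
  intro hb
  have hint : IsIntegral (Polynomial k) b := by
    refine ⟨X ^ 2 - C (aPoly k c), monic_X_pow_sub_C _ two_ne_zero, ?_⟩
    simp [hb]
  obtain ⟨p, hp⟩ := IsIntegrallyClosed.isIntegral_iff.mp hint
  have hinj := IsFractionRing.injective (Polynomial k) (FractionRing (Polynomial k))
  have hpq : p ^ 2 = aPoly k c := by
    apply hinj; rw [map_pow, hp, hb]
  have ha0 : aPoly k c ≠ 0 := by
    intro h; have := aPoly_natDegree k c; rw [h] at this; simp at this
  have hp0 : p ≠ 0 := by rintro rfl; simp at hpq; exact ha0 hpq.symm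
  have := aPoly_natDegree k c
  rw [← hpq, natDegree_pow] at this
  omega

lemma irr_q (c : k) : Irreducible (X ^ 2 - C (aPoly k c) : Polynomial (Polynomial k)) := by
  have hm : (X ^ 2 - C (aPoly k c) : Polynomial (Polynomial k)).Monic :=
    monic_X_pow_sub_C _ two_ne_zero
  rw [hm.irreducible_iff_irreducible_map_fraction_map (K := FractionRing (Polynomial k))]
  have : (X ^ 2 - C (aPoly k c) : Polynomial (Polynomial k)).map
      (algebraMap (Polynomial k) (FractionRing (Polynomial k)))
      = X ^ 2 - C (algebraMap (Polynomial k) (FractionRing (Polynomial k)) (aPoly k c)) := by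
    simp
  rw [this]
  exact X_pow_sub_C_irreducible_of_prime Nat.prime_two (aPoly_not_square k c)

def myEquiv : MvPolynomial (Fin 2) k ≃+* Polynomial (Polynomial k) :=
  (MvPolynomial.renameEquiv k (Equiv.swap (0 : Fin 2) 1)).toRingEquiv.trans
    ((MvPolynomial.finSuccEquiv k 1).toRingEquiv.trans
      (Polynomial.mapEquiv ((MvPolynomial.finSuccEquiv k 0).toRingEquiv.trans
        (Polynomial.mapEquiv (MvPolynomial.isEmptyAlgEquiv k (Fin 0)).toRingEquiv))))

set_option maxRecDepth 8000 in
lemma myEquiv_apply (c : k) :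
    myEquiv k ((MvPolynomial.X 1 : MvPolynomial (Fin 2) k) ^ 2
        - (MvPolynomial.X 0) ^ 3 - MvPolynomial.C c * (MvPolynomial.X 0) ^ 2)
      = X ^ 2 - C (aPoly k c) := by
  have h1 : (1 : Fin 2) = Fin.succ 0 := rfl
  have hfC : ∀ (n : ℕ) (x : k), MvPolynomial.finSuccEquiv k n (MvPolynomial.C x)
      = Polynomial.C (MvPolynomial.C x) := fun n x => by
    simp [MvPolynomial.finSuccEquiv_apply]
  have heC : MvPolynomial.isEmptyAlgEquiv k (Fin 0) (MvPolynomial.C c) = c := by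
    have := (MvPolynomial.isEmptyAlgEquiv k (Fin 0)).commutes c
    simpa [MvPolynomial.algebraMap_eq] using this
  have hX1 : myEquiv k (MvPolynomial.X 1) = X := by
    simp only [myEquiv, RingEquiv.trans_apply, AlgEquiv.toRingEquiv_eq_coe,
      AlgEquiv.coe_ringEquiv, MvPolynomial.renameEquiv_apply, MvPolynomial.rename_X,
      Equiv.swap_apply_right, MvPolynomial.finSuccEquiv_X_zero,
      Polynomial.mapEquiv_apply, Polynomial.map_X]
  have hX0 : myEquiv k (MvPolynomial.X 0) = C X := by
    simp only [myEquiv, RingEquiv.trans_apply, AlgEquiv.toRingEquiv_eq_coe,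
      AlgEquiv.coe_ringEquiv, MvPolynomial.renameEquiv_apply, MvPolynomial.rename_X,
      Equiv.swap_apply_left, h1, MvPolynomial.finSuccEquiv_X_succ,
      Polynomial.mapEquiv_apply, Polynomial.map_C, RingEquiv.coe_toRingHom, RingEquiv.trans_apply, MvPolynomial.finSuccEquiv_X_zero,
      Polynomial.map_X]
  have hC : myEquiv k (MvPolynomial.C c) = C (C c) := by
    simp only [myEquiv, RingEquiv.trans_apply, AlgEquiv.toRingEquiv_eq_coe,
      AlgEquiv.coe_ringEquiv, MvPolynomial.renameEquiv_apply, MvPolynomial.rename_C,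
      hfC, Polynomial.mapEquiv_apply, Polynomial.map_C, RingEquiv.coe_toRingHom, RingEquiv.trans_apply, heC]
  simp only [map_sub, map_pow, map_mul, hX0, hX1, hC, aPoly]
  rw [map_add, map_mul, map_pow, map_pow]
  ring

end

/-- Let `k` be a field and `c ∈ k`. The polynomial `Y² − X³ − cX²`
generates a prime ideal in `k[X,Y]`; equivalently, the quotient ring
`k[X,Y]/(Y² − X³ − cX²)` is an integral domain. -/
theorem cubic_ideal_isPrime (k : Type*) [Field k] (c : k) :
    (Ideal.span {(MvPolynomial.X 1 : MvPolynomial (Fin 2) k) ^ 2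
        - (MvPolynomial.X 0) ^ 3 - MvPolynomial.C c * (MvPolynomial.X 0) ^ 2}).IsPrime ∧
      IsDomain (MvPolynomial (Fin 2) k ⧸
        Ideal.span {(MvPolynomial.X 1 : MvPolynomial (Fin 2) k) ^ 2
          - (MvPolynomial.X 0) ^ 3 - MvPolynomial.C c * (MvPolynomial.X 0) ^ 2}) := by
  have hq : Prime (Polynomial.X ^ 2 - Polynomial.C (aPoly k c) :
      Polynomial (Polynomial k)) :=
    (UniqueFactorizationMonoid.irreducible_iff_prime).mp (irr_q k c)
  have hprime : Prime ((MvPolynomial.X 1 : MvPolynomial (Fin 2) k) ^ 2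
      - (MvPolynomial.X 0) ^ 3 - MvPolynomial.C c * (MvPolynomial.X 0) ^ 2) := by
    rw [← MulEquiv.prime_iff (myEquiv k).toMulEquiv]
    simpa [myEquiv_apply k c] using hq
  have h1 : (Ideal.span {(MvPolynomial.X 1 : MvPolynomial (Fin 2) k) ^ 2
      - (MvPolynomial.X 0) ^ 3 - MvPolynomial.C c * (MvPolynomial.X 0) ^ 2}).IsPrime :=
    (Ideal.span_singleton_prime hprime.ne_zero).mpr hprime
  exact ⟨h1, (Ideal.Quotient.isDomain_iff_prime _).mpr h1⟩
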